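/- Every nonempty x-interval of a cyclic suffix array is an ℓ-interval for some unique ℓ ≥ |x|, and conversely every ℓ-interval is an x-interval for some string x of length ℓ. -/

import Mathlib

set_option linter.unusedSectionVars false

namespace SILA

variable {α : Type*} [LinearOrder α]

/-- Lexicographic order on infinite strings. -/
def lexLE (f g : ℕ → α) : Prop :=
  f = g ∨ ∃ k, (∀ m < k, f m = g m) ∧ f k < g k

/-- Length of longest common prefix of two infinite strings, in ℕ∞. -/
noncomputable def lcpInf (f g : ℕ → α) : ℕ∞ :=
  sSup {m : ℕ∞ | ∀ k : ℕ, (k : ℕ∞) < m → f k = g k}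

/-- A (nonempty) cyclic word. -/
structure CyclicWord (α : Type*) where
  word : List α
  ne : word ≠ []

def CyclicWord.len (w : CyclicWord α) : ℕ := w.word.length

lemma CyclicWord.len_pos (w : CyclicWord α) : 0 < w.len :=
  List.length_pos_iff.mpr w.ne

/-- Positions in a multiset (family) of cyclic words. -/
def Pos {s : ℕ} (W : Fin s → CyclicWord α) : Type _ :=
  (i : Fin s) × Fin (W i).len

instance {s : ℕ} (W : Fin s → CyclicWord α) : Fintype (Pos W) := by
  unfold Pos; infer_instance

/-- The infinite cyclic suffix starting at a position. -/
def suffixAt {s : ℕ} (W : Fin s → CyclicWord α) (p : Pos W) : ℕ → α :=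
  fun k => (W p.1).word.get ⟨(p.2.val + k) % (W p.1).len, Nat.mod_lt _ (W p.1).len_pos⟩

/-- `SA` is a cyclic suffix array of `W`: it enumerates all positions in
nondecreasing lexicographic order of their cyclic suffixes. -/
def IsCyclicSA {s n : ℕ} (W : Fin s → CyclicWord α) (SA : Fin n ≃ Pos W) : Prop :=
  ∀ r r' : Fin n, r ≤ r' → lexLE (suffixAt W (SA r)) (suffixAt W (SA r'))

/-- The LCP array of a cyclic suffix array (meaningful on indices 1..n-1). -/
noncomputable def lcpArr {s n : ℕ} (W : Fin s → CyclicWord α) (SA : Fin n ≃ Pos W)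
    (r : ℕ) : ℕ∞ :=
  if h : 0 < r ∧ r < n then
    lcpInf (suffixAt W (SA ⟨r - 1, by omega⟩)) (suffixAt W (SA ⟨r, h.2⟩))
  else 0

/-- The Burrows–Wheeler transform: character cyclically preceding the suffix of rank `r`. -/
def bwt {s n : ℕ} (W : Fin s → CyclicWord α) (SA : Fin n ≃ Pos W) (r : Fin n) : α :=
  (W (SA r).1).word.get ⟨((SA r).2.val + (W (SA r).1).len - 1) % (W (SA r).1).len,
    Nat.mod_lt _ (W (SA r).1).len_pos⟩

/-- `x` is a (finite) prefix of the infinite string `f`. -/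
def IsPrefix (x : List α) (f : ℕ → α) : Prop :=
  ∀ m : Fin x.length, f m.val = x.get m

/-- `[i..j)` is the x-interval: the ranks of exactly those suffixes with prefix `x`. -/
def IsXInterval {s n : ℕ} (W : Fin s → CyclicWord α) (SA : Fin n ≃ Pos W)
    (x : List α) (i j : ℕ) : Prop :=
  i ≤ j ∧ j ≤ n ∧ ∀ r : Fin n, IsPrefix x (suffixAt W (SA r)) ↔ (i ≤ r.val ∧ r.val < j)

/-- `[i..j)` is an ℓ-interval of the LCP array `L` (of length `n`, indices 1..n-1). -/
def IsLInterval (L : ℕ → ℕ∞) (n : ℕ) (ℓ : ℕ∞) (i j : ℕ) : Prop :=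
  i < j ∧ j ≤ n ∧
  (i = 0 ∨ L i < ℓ) ∧
  (∀ r, i < r → r < j → ℓ ≤ L r) ∧
  ((i + 1 = j ∧ ℓ = ⊤) ∨ ∃ r, i < r ∧ r < j ∧ L r = ℓ) ∧
  (j = n ∨ L j < ℓ)


lemma lcpInf_spec (f g : ℕ → α) (k : ℕ) (h : (k : ℕ∞) < lcpInf f g) : f k = g k := by
  rw [lcpInf, lt_sSup_iff] at h
  obtain ⟨m, hm, hkm⟩ := h
  exact hm k hkm

lemma le_lcpInf {f g : ℕ → α} {m : ℕ} (h : ∀ k < m, f k = g k) : (m : ℕ∞) ≤ lcpInf f g :=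
  le_sSup (fun k hk => h k (by exact_mod_cast hk))

lemma lcpInf_comm (f g : ℕ → α) : lcpInf f g = lcpInf g f := by
  unfold lcpInf
  apply congrArg
  ext m
  exact ⟨fun h k hk => (h k hk).symm, fun h k hk => (h k hk).symm⟩

lemma prefix_transfer {x : List α} {f g : ℕ → α} (hx : IsPrefix x f)
    (h : (x.length : ℕ∞) ≤ lcpInf f g) : IsPrefix x g := by
  intro m
  rw [← hx m]
  exact (lcpInf_spec f g m (lt_of_lt_of_le (by exact_mod_cast m.2) h)).symm

lemma lcp_ge_of_prefix {x : List α} {f g : ℕ → α} (hf : IsPrefix x f) (hg : IsPrefix x g) :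
    (x.length : ℕ∞) ≤ lcpInf f g :=
  le_lcpInf (fun k hk => by rw [hf ⟨k, hk⟩, hg ⟨k, hk⟩])

lemma prefix_between {x : List α} {f g h : ℕ → α} (hfg : lexLE f g) (hgh : lexLE g h)
    (hf : IsPrefix x f) (hh : IsPrefix x h) : IsPrefix x g := by
  classical
  by_contra hcon
  simp only [IsPrefix, not_forall] at hcon
  obtain ⟨m0, hm0⟩ := hcon
  have hP : ∃ k, ∃ hk : k < x.length, g k ≠ x.get ⟨k, hk⟩ := ⟨m0.val, m0.2, by
    simpa using hm0⟩
  set m := Nat.find hP with hmdef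
  obtain ⟨hmlt, hmne⟩ : ∃ hk : m < x.length, g m ≠ x.get ⟨m, hk⟩ := Nat.find_spec hP
  have hmin : ∀ k (hk : k < m), g k = x.get ⟨k, lt_trans hk hmlt⟩ := by
    intro k hk
    by_contra hne
    exact Nat.find_min hP hk ⟨lt_trans hk hmlt, hne⟩
  -- From lexLE f g conclude x.get m < g m
  have h1 : x.get ⟨m, hmlt⟩ < g m := by
    rcases hfg with rfl | ⟨k, hkeq, hklt⟩
    · exact absurd (hf ⟨m, hmlt⟩) hmne
    · rcases lt_trichotomy k m with hkm | hkm | hkm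
      · have hx1 : f k = x.get ⟨k, lt_trans hkm hmlt⟩ := hf ⟨k, lt_trans hkm hmlt⟩
        have hx2 : g k = x.get ⟨k, lt_trans hkm hmlt⟩ := hmin k hkm
        rw [hx1, hx2] at hklt
        exact absurd hklt (lt_irrefl _)
      · rw [hkm] at hklt
        rw [← hf ⟨m, hmlt⟩]; exact hklt
      · have : f m = g m := hkeq m hkm
        rw [← this, hf ⟨m, hmlt⟩] at hmne
        exact absurd rfl hmne
  -- From lexLE g h conclude g m < x.get m, contradiction
  rcases hgh with rfl | ⟨k, hkeq, hklt⟩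
  · exact absurd (hh ⟨m, hmlt⟩) hmne
  · rcases lt_trichotomy k m with hkm | hkm | hkm
    · have hx1 : g k = x.get ⟨k, lt_trans hkm hmlt⟩ := hmin k hkm
      have hx2 : h k = x.get ⟨k, lt_trans hkm hmlt⟩ := hh ⟨k, lt_trans hkm hmlt⟩
      rw [hx1, hx2] at hklt
      exact absurd hklt (lt_irrefl _)
    · rw [hkm, hh ⟨m, hmlt⟩] at hklt
      exact absurd (lt_trans h1 hklt) (lt_irrefl _)
    · have : g m = h m := hkeq m hkm
      rw [this, hh ⟨m, hmlt⟩] at hmne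
      exact absurd rfl hmne

lemma lcpArr_pos {s n : ℕ} (W : Fin s → CyclicWord α) (SA : Fin n ≃ Pos W) {r : ℕ}
    (h1 : 0 < r) (h2 : r < n) :
    lcpArr W SA r = lcpInf (suffixAt W (SA ⟨r - 1, by omega⟩)) (suffixAt W (SA ⟨r, h2⟩)) := by
  rw [lcpArr, dif_pos ⟨h1, h2⟩]

/-- Every nonempty x-interval of a cyclic suffix array is an
ℓ-interval for a unique ℓ with ℓ ≥ |x|; conversely, every ℓ-interval (ℓ finite)
is an x-interval for some string `x` of length ℓ. -/
theorem xInterval_iff_lInterval {α : Type*} [LinearOrder α] {s n : ℕ}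
    (W : Fin s → CyclicWord α) (SA : Fin n ≃ Pos W) (hSA : IsCyclicSA W SA) :
    (∀ (x : List α) (i j : ℕ), IsXInterval W SA x i j → i < j →
      ∃ ℓ : ℕ∞, IsLInterval (lcpArr W SA) n ℓ i j ∧ (x.length : ℕ∞) ≤ ℓ ∧
        ∀ ℓ' : ℕ∞, IsLInterval (lcpArr W SA) n ℓ' i j → ℓ' = ℓ) ∧
    (∀ (ℓ : ℕ) (i j : ℕ), IsLInterval (lcpArr W SA) n (ℓ : ℕ∞) i j →
      ∃ x : List α, x.length = ℓ ∧ IsXInterval W SA x i j) := by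
  classical
  constructor
  · -- forward direction
    intro x i j hxij hij
    obtain ⟨hijle, hjn, hiff⟩ := hxij
    have hpre : ∀ r : Fin n, i ≤ r.val → r.val < j → IsPrefix x (suffixAt W (SA r)) :=
      fun r h1 h2 => (hiff r).mpr ⟨h1, h2⟩
    set L := lcpArr W SA with hLdef
    set ℓ : ℕ∞ := (Finset.Ioo i j).inf L with hldef
    have hLx : ∀ r ∈ Finset.Ioo i j, (x.length : ℕ∞) ≤ L r := by
      intro r hr
      rw [Finset.mem_Ioo] at hr
      have h1 : 0 < r := by omega
      have h2 : r < n := by omega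
      rw [hLdef, lcpArr_pos W SA h1 h2]
      exact lcp_ge_of_prefix (hpre ⟨r - 1, by omega⟩ (by show i ≤ r - 1; omega)
          (by show r - 1 < j; omega))
        (hpre ⟨r, h2⟩ (by show i ≤ r; omega) (by show r < j; omega))
    have hlen : (x.length : ℕ∞) ≤ ℓ := Finset.le_inf hLx
    have hinf_le : ∀ r, i < r → r < j → ℓ ≤ L r := by
      intro r h1 h2
      exact Finset.inf_le (Finset.mem_Ioo.mpr ⟨h1, h2⟩)
    have hleft : i = 0 ∨ L i < ℓ := by
      rcases Nat.eq_zero_or_pos i with h0 | hpos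
      · exact Or.inl h0
      · right
        have hin : i < n := by omega
        have hlt : L i < (x.length : ℕ∞) := by
          by_contra hge
          push_neg at hge
          rw [hLdef, lcpArr_pos W SA hpos hin] at hge
          have := prefix_transfer (hpre ⟨i, hin⟩ le_rfl hij)
            (by rwa [lcpInf_comm])
          have h' : i ≤ i - 1 ∧ i - 1 < j := (hiff ⟨i - 1, by omega⟩).mp this
          omega
        exact lt_of_lt_of_le hlt hlen
    have hright : j = n ∨ L j < ℓ := by
      rcases eq_or_lt_of_le hjn with h0 | hjlt
      · exact Or.inl h0
      · right
        have hjpos : 0 < j := by omega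
        have hlt : L j < (x.length : ℕ∞) := by
          by_contra hge
          push_neg at hge
          rw [hLdef, lcpArr_pos W SA hjpos hjlt] at hge
          have := prefix_transfer (hpre ⟨j - 1, by omega⟩ (by show i ≤ j - 1; omega)
            (by show j - 1 < j; omega)) hge
          have h' : i ≤ j ∧ j < j := (hiff ⟨j, hjlt⟩).mp this
          omega
        exact lt_of_lt_of_le hlt hlen
    have hex : (i + 1 = j ∧ ℓ = ⊤) ∨ ∃ r, i < r ∧ r < j ∧ L r = ℓ := by
      rcases eq_or_lt_of_le (Nat.succ_le_of_lt hij) with h1 | h1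
      · left
        refine ⟨h1, ?_⟩
        rw [hldef, show Finset.Ioo i j = ∅ from Finset.eq_empty_of_forall_notMem
          (fun r hr => by rw [Finset.mem_Ioo] at hr; omega), Finset.inf_empty]
      · right
        have hne : (Finset.Ioo i j).Nonempty := ⟨i + 1, Finset.mem_Ioo.mpr ⟨by omega, h1⟩⟩
        obtain ⟨r, hr, hreq⟩ := Finset.exists_mem_eq_inf (Finset.Ioo i j) hne L
        rw [Finset.mem_Ioo] at hr
        exact ⟨r, hr.1, hr.2, hreq.symm⟩
    refine ⟨ℓ, ⟨hij, hjn, hleft, hinf_le, hex, hright⟩, hlen, ?_⟩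
    intro ℓ' hL'
    obtain ⟨-, -, -, hmid', hex', -⟩ := hL'
    rcases hex' with ⟨h1, rfl⟩ | ⟨r, hr1, hr2, hreq⟩
    · rw [hldef, show Finset.Ioo i j = ∅ from Finset.eq_empty_of_forall_notMem
        (fun r hr => by rw [Finset.mem_Ioo] at hr; omega), Finset.inf_empty]
    · apply le_antisymm
      · exact Finset.le_inf (fun r' hr' => by
          rw [Finset.mem_Ioo] at hr'
          exact hmid' r' hr'.1 hr'.2)
      · rw [← hreq]
        exact hinf_le r hr1 hr2
  · -- converse direction
    intro ℓ i j hL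
    obtain ⟨hij, hjn, hleft, hmid, hex, hright⟩ := hL
    have hin : i < n := lt_of_lt_of_le hij hjn
    set f0 : ℕ → α := suffixAt W (SA ⟨i, hin⟩) with hf0
    set x : List α := List.ofFn (fun k : Fin ℓ => f0 k.val) with hx
    have hxlen : x.length = ℓ := List.length_ofFn
    have hxi : IsPrefix x f0 := by
      intro m
      simp [hx, List.get_ofFn]
    have hchain : ∀ d (hd : i + d < j), IsPrefix x (suffixAt W (SA ⟨i + d, by omega⟩)) := by
      intro d
      induction d with
      | zero => intro hd; exact hxi
      | succ d ih =>
        intro hd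
        have hd' : i + d < j := by omega
        have hLr : (ℓ : ℕ∞) ≤ lcpArr W SA (i + d + 1) := hmid _ (by omega) (by omega)
        rw [lcpArr_pos W SA (by omega) (by omega)] at hLr
        have hprev : IsPrefix x (suffixAt W (SA ⟨i + d + 1 - 1, by omega⟩)) := ih hd'
        exact prefix_transfer hprev (by rw [hxlen]; exact hLr)
    refine ⟨x, hxlen, le_of_lt hij, hjn, ?_⟩
    intro r
    constructor
    · intro hp
      by_contra hcon
      push_neg at hcon
      rcases Nat.lt_or_ge r.val i with hri | hri
      · -- r < i : contradiction with left boundary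
        have hipos : 0 < i := by omega
        rcases hleft with h0 | hlt
        · omega
        · have hm1 : IsPrefix x (suffixAt W (SA ⟨i - 1, by omega⟩)) := by
            refine prefix_between (hSA r ⟨i - 1, by omega⟩ ?_) (hSA ⟨i - 1, by omega⟩ ⟨i, hin⟩ ?_)
              hp hxi
            · exact Fin.le_def.mpr (by show r.val ≤ i - 1; omega)
            · exact Fin.le_def.mpr (by show i - 1 ≤ i; omega)
          have : (ℓ : ℕ∞) ≤ lcpArr W SA i := by
            rw [lcpArr_pos W SA hipos hin, ← hxlen]
            exact lcp_ge_of_prefix hm1 hxi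
          exact absurd hlt (not_lt.mpr this)
      · -- i ≤ r; must have r < j, else contradiction with right boundary
        have hrj : j ≤ r.val := hcon hri
        have hjlt : j < n := lt_of_le_of_lt hrj r.2
        rcases hright with h0 | hlt
        · omega
        · have hjpos : 0 < j := by omega
          have hpj1 : IsPrefix x (suffixAt W (SA ⟨j - 1, by omega⟩)) := by
            have h := hchain (j - 1 - i) (by omega)
            have he : (⟨i + (j - 1 - i), by omega⟩ : Fin n) = ⟨j - 1, by omega⟩ :=
              Fin.ext (by simp; omega)
            rwa [he] at h
          have hpj : IsPrefix x (suffixAt W (SA ⟨j, hjlt⟩)) := by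
            refine prefix_between (hSA ⟨j - 1, by omega⟩ ⟨j, hjlt⟩ ?_) (hSA ⟨j, hjlt⟩ r ?_)
              hpj1 hp
            · exact Fin.le_def.mpr (by show j - 1 ≤ j; omega)
            · exact Fin.le_def.mpr (by show j ≤ r.val; omega)
          have : (ℓ : ℕ∞) ≤ lcpArr W SA j := by
            rw [lcpArr_pos W SA hjpos hjlt, ← hxlen]
            exact lcp_ge_of_prefix hpj1 hpj
          exact absurd hlt (not_lt.mpr this)
    · rintro ⟨h1, h2⟩
      have h := hchain (r.val - i) (by omega)
      have he : (⟨i + (r.val - i), by omega⟩ : Fin n) = r := Fin.ext (by simp; omega)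
      rwa [he] at h

end SILA
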